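/- Let X and Y be Hausdorff topological spaces, A ⊆ X, and let f : Y → X be a continuous map whose range is exactly A. Form the quotient space W̄ of the disjoint union X ⊕ (Y × [0,1]) by the equivalence relation generated by identifying (y, 0) with f(y), with quotient map p. Then the map X → W̄ given by x ↦ p(inl x) is a topological embedding, i.e., a homeomorphism of X onto its image p(X) with the subspace topology. -/

import Mathlib

/-- The gluing relation on `X ⊕ (Y × [0,1])` identifying `(y, 0)` with `f y`. -/
def glueRel {X Y : Type*} (f : Y → X) :
    X ⊕ (Y × unitInterval) → X ⊕ (Y × unitInterval) → Prop :=
  fun w w' => ∃ y : Y, w = Sum.inr (y, 0) ∧ w' = Sum.inl (f y)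

/-- The natural map `X → W̄`, `x ↦ p (inl x)`, into the adjunction
space `W̄ = (X ⊕ (Y × [0,1])) / (glueRel f)` is a topological embedding. -/
theorem embedding_into_adjunction_space
    {X Y : Type*} [TopologicalSpace X] [TopologicalSpace Y]
    [T2Space X] [T2Space Y]
    (A : Set X) (f : Y → X) (hf : Continuous f) (hrange : Set.range f = A) :
    Topology.IsEmbedding (fun x : X => Quot.mk (glueRel f) (Sum.inl x)) := by
  -- A continuous retraction of the adjunction space back onto `X`.
  set g : X ⊕ (Y × unitInterval) → X := Sum.elim id (fun p => f p.1) with hg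
  have hgrel : ∀ a b, glueRel f a b → g a = g b := by
    rintro a b ⟨y, rfl, rfl⟩
    simp [hg]
  let G : Quot (glueRel f) → X := Quot.lift g hgrel
  have hGcont : Continuous G := by
    exact continuous_quot_lift _ (continuous_id.sumElim (hf.comp continuous_fst))
  have hleft : Function.LeftInverse G
      (fun x : X => Quot.mk (glueRel f) (Sum.inl x)) := fun x => rfl
  exact hleft.isEmbedding hGcont (continuous_quot_mk.comp continuous_inl)
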